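/- Let G be a simple graph on n vertices and let T = T(G) be the graph on the same vertex set in which two distinct vertices x, y are adjacent if and only if there exists a vertex z with xz and zy both edges of G. Then the number of edges of T is at least the number of edges of G minus ⌊n/2⌋, i.e. |E(T)| ≥ |E(G)| − ⌊n/2⌋. -/

import Mathlib

/-- A triple system: a family of 3-element subsets of the vertex type. -/
def isTripleSystem {V : Type*} (F : Finset (Finset V)) : Prop :=
  ∀ t ∈ F, t.card = 3

/-- `F` contains the configuration described by `pattern` (a list of triples on `Fin m`)
if there is an injection of `Fin m` into the vertex set mapping each triple of the
pattern to a member of `F`. -/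
def containsConfig {V : Type*} [DecidableEq V] {m : ℕ}
    (F : Finset (Finset V)) (pattern : List (Finset (Fin m))) : Prop :=
  ∃ f : Fin m → V, Function.Injective f ∧ ∀ t ∈ pattern, t.image f ∈ F

/-- Configuration A: triples {1,2,4},{1,3,5},{2,3,6} on 6 vertices (0-indexed). -/
def configA : List (Finset (Fin 6)) := [{0,1,3}, {0,2,4}, {1,2,5}]

/-- Configuration B: triples {1,2,5},{1,3,4},{2,3,4} on 5 vertices (0-indexed). -/
def configB : List (Finset (Fin 5)) := [{0,1,4}, {0,2,3}, {1,2,3}]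

/-- Configuration C: triples {1,2,4},{1,3,4},{2,3,4} on 4 vertices (0-indexed). -/
def configC : List (Finset (Fin 4)) := [{0,1,3}, {0,2,3}, {1,2,3}]

/-- Configuration D: triples {1,2,3},{1,3,4},{2,3,5} on 5 vertices (0-indexed). -/
def configD : List (Finset (Fin 5)) := [{0,1,2}, {0,2,3}, {1,2,4}]


/-- The graph T(G): two distinct vertices are adjacent iff they are joined by a path
of length 2 in G. -/
def pathTwoGraph {V : Type*} (G : SimpleGraph V) : SimpleGraph V where
  Adj x y := x ≠ y ∧ ∃ z : V, G.Adj x z ∧ G.Adj z y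
  symm := by
    refine ⟨?_⟩
    rintro x y ⟨hxy, z, h1, h2⟩
    exact ⟨hxy.symm, z, h2.symm, h1.symm⟩
  loopless := by
    refine ⟨?_⟩
    rintro x ⟨h, -⟩
    exact h rfl

open Finset

namespace PathTwoAux

variable {V : Type*} [Fintype V] [DecidableEq V] (G : SimpleGraph V) [DecidableRel G.Adj]

instance : DecidableRel (pathTwoGraph G).Adj :=
  fun x y => decidable_of_iff (x ≠ y ∧ ∃ z, G.Adj x z ∧ G.Adj z y) Iff.rfl

/-- second neighborhood (including `u` itself when `u` is non-isolated) -/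
def N2 (u : V) : Finset V := univ.filter (fun w => ∃ z, G.Adj u z ∧ G.Adj z w)

lemma degree_le_N2 {u v : V} (h : G.Adj u v) : G.degree v ≤ (N2 G u).card := by
  rw [← SimpleGraph.card_neighborFinset_eq_degree]
  apply Finset.card_le_card
  intro w hw
  simp only [N2, mem_filter, mem_univ, true_and]
  exact ⟨v, h, by simpa using hw⟩

lemma N2_card_le (u : V) : (N2 G u).card ≤ (pathTwoGraph G).degree u + 1 := by
  rw [← SimpleGraph.card_neighborFinset_eq_degree]
  have hsub : N2 G u ⊆ insert u ((pathTwoGraph G).neighborFinset u) := by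
    intro w hw
    simp only [N2, mem_filter, mem_univ, true_and] at hw
    rcases eq_or_ne w u with rfl | hne
    · exact mem_insert_self _ _
    · refine mem_insert_of_mem ?_
      rw [SimpleGraph.mem_neighborFinset]
      exact ⟨hne.symm, hw⟩
  calc (N2 G u).card ≤ _ := Finset.card_le_card hsub
    _ ≤ _ + 1 := Finset.card_insert_le _ _

/-- generic decomposition of a sum over ordered adjacent pairs -/
lemma sum_pairs {M : Type*} [AddCommMonoid M] (f : V → V → M) :
    ∑ p ∈ univ.filter (fun p : V × V => G.Adj p.1 p.2), f p.1 p.2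
      = ∑ u, ∑ v ∈ G.neighborFinset u, f u v := by
  rw [Finset.sum_filter, Fintype.sum_prod_type]
  refine Finset.sum_congr rfl fun u _ => ?_
  rw [SimpleGraph.neighborFinset_eq_filter, Finset.sum_filter]

lemma key_sum : ∑ u, G.degree u ≤ ∑ u, (N2 G u).card := by
  have hQ : (∑ u, (G.degree u : ℚ)) ≤ ∑ u, ((N2 G u).card : ℚ) := by
    set P : Finset (V × V) := univ.filter (fun p : V × V => G.Adj p.1 p.2) with hP
    have hmem : ∀ p ∈ P, G.Adj p.1 p.2 := fun p hp => (Finset.mem_filter.1 hp).2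
    have hApos : ∀ p ∈ P, (0 : ℚ) < G.degree p.1 ∧ (0 : ℚ) < G.degree p.2 := by
      intro p hp
      have h := hmem p hp
      constructor
      · exact_mod_cast (G.degree_pos_iff_exists_adj p.1).2 ⟨p.2, h⟩
      · exact_mod_cast (G.degree_pos_iff_exists_adj p.2).2 ⟨p.1, h.symm⟩
    -- A = sum of d v / d u over ordered edges (u,v)
    set A : ℚ := ∑ p ∈ P, (G.degree p.2 : ℚ) / (G.degree p.1 : ℚ) with hA
    have hswap : A = ∑ p ∈ P, (G.degree p.1 : ℚ) / (G.degree p.2 : ℚ) := by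
      rw [hA]
      refine Finset.sum_nbij' (fun p => Prod.swap p) (fun p => Prod.swap p) ?_ ?_ ?_ ?_ ?_
      · intro p hp
        simpa [hP] using ((Finset.mem_filter.1 hp).2).symm
      · intro p hp
        simpa [hP] using ((Finset.mem_filter.1 hp).2).symm
      · intro p _; rfl
      · intro p _; rfl
      · intro p _; rfl
    have hcard : (P.card : ℚ) = ∑ u, (G.degree u : ℚ) := by
      have : P.card = ∑ u, G.degree u := by
        rw [Finset.card_eq_sum_ones, sum_pairs G (fun _ _ => (1 : ℕ))]
        refine Finset.sum_congr rfl fun u _ => ?_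
        rw [← Finset.card_eq_sum_ones, SimpleGraph.card_neighborFinset_eq_degree]
      exact_mod_cast congrArg (Nat.cast : ℕ → ℚ) this
    have hAM : 2 * (P.card : ℚ) ≤ 2 * A := by
      have h2A : 2 * A = ∑ p ∈ P, ((G.degree p.2 : ℚ) / (G.degree p.1 : ℚ)
          + (G.degree p.1 : ℚ) / (G.degree p.2 : ℚ)) := by
        rw [Finset.sum_add_distrib, ← hA, ← hswap]; ring
      rw [h2A]
      calc 2 * (P.card : ℚ) = ∑ _p ∈ P, (2 : ℚ) := by
            rw [Finset.sum_const, nsmul_eq_mul]; ring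
        _ ≤ _ := by
            refine Finset.sum_le_sum ?_
            intro p hp
            obtain ⟨ha, hb⟩ := hApos p hp
            rw [div_add_div _ _ (ne_of_gt ha) (ne_of_gt hb), le_div_iff₀ (by positivity)]
            nlinarith [sq_nonneg ((G.degree p.1 : ℚ) - (G.degree p.2 : ℚ))]
    have hAle : A ≤ ∑ u, ((N2 G u).card : ℚ) := by
      rw [hA, hP, sum_pairs G (fun u v => (G.degree v : ℚ) / (G.degree u : ℚ))]
      refine Finset.sum_le_sum ?_
      intro u _
      rcases Nat.eq_zero_or_pos (G.degree u) with hd | hd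
      · have : G.neighborFinset u = ∅ := by
          rwa [← Finset.card_eq_zero, SimpleGraph.card_neighborFinset_eq_degree]
        rw [this]
        simp
      · have hdpos : (0 : ℚ) < (G.degree u : ℚ) := by exact_mod_cast hd
        calc ∑ v ∈ G.neighborFinset u, (G.degree v : ℚ) / (G.degree u : ℚ)
            ≤ (G.neighborFinset u).card • (((N2 G u).card : ℚ) / (G.degree u : ℚ)) := by
              refine Finset.sum_le_card_nsmul _ _ _ ?_
              intro v hv
              have hadj : G.Adj u v := by simpa using hv
              have h1 : (G.degree v : ℚ) ≤ ((N2 G u).card : ℚ) := by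
                exact_mod_cast degree_le_N2 G hadj
              exact (div_le_div_iff_of_pos_right hdpos).2 h1
          _ = ((N2 G u).card : ℚ) := by
              rw [SimpleGraph.card_neighborFinset_eq_degree, nsmul_eq_mul, mul_comm,
                div_mul_cancel₀ _ (ne_of_gt hdpos)]
    linarith [hAM, hAle, hcard]
  exact_mod_cast hQ


lemma aux_final : 2 * G.edgeSet.ncard ≤ 2 * (pathTwoGraph G).edgeSet.ncard + Fintype.card V := by
  have e1 : G.edgeSet.ncard = G.edgeFinset.card := by
    rw [← SimpleGraph.coe_edgeFinset, Set.ncard_coe_finset]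
  have e2 : (pathTwoGraph G).edgeSet.ncard = (pathTwoGraph G).edgeFinset.card := by
    rw [← SimpleGraph.coe_edgeFinset, Set.ncard_coe_finset]
  rw [e1, e2, ← SimpleGraph.sum_degrees_eq_twice_card_edges,
    ← SimpleGraph.sum_degrees_eq_twice_card_edges]
  have h1 := key_sum G
  have h2 : ∑ u, (N2 G u).card ≤ ∑ u : V, ((pathTwoGraph G).degree u + 1) :=
    Finset.sum_le_sum (fun u _ => N2_card_le G u)
  rw [Finset.sum_add_distrib, Finset.sum_const, smul_eq_mul, mul_one, Finset.card_univ] at h2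
  linarith

end PathTwoAux

/-- |E(T(G))| ≥ |E(G)| − ⌊n/2⌋. -/
theorem pathTwo_edge_bound {V : Type*} [Fintype V] (n : ℕ) (hn : Fintype.card V = n)
    (G : SimpleGraph V) :
    G.edgeSet.ncard - n / 2 ≤ (pathTwoGraph G).edgeSet.ncard := by
  classical
  have h := PathTwoAux.aux_final G
  rw [hn] at h
  omega
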